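/- Let f be a multivariate real polynomial in n variables, let h ∈ ℝ^n, and let g ∈ cone(h). Suppose there exist q ∈ ℤ^n and z ∈ ℝ with f(q) ≤ z, and g(x) ≤ f(x) for every x ∈ ℝ^n belonging to the sublevel set {x ∈ ℝ^n : f(x) ≤ z}. Then g(round(h)) ≤ f(x) for every x ∈ ℤ^n. In particular, this holds whenever there is a sum-of-squares polynomial σ such that f − g − σ·(z − f) is a sum of squares: then g(round(h)) ≤ inf_{x ∈ ℤ^n} f(x). -/
import Mathlib

open MvPolynomial Finset


/-- `g ∈ cone(h)`: a conic combination of monomials with even exponents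
shifted by `h` (the constant coefficient `b 0` may be arbitrary). -/
def MemCone {n : ℕ} (h : Fin n → ℝ) (g : MvPolynomial (Fin n) ℝ) : Prop :=
  ∃ (J : Finset (Fin n → ℕ)) (b : (Fin n → ℕ) → ℝ),
    (∀ α ∈ J, α ≠ 0 → 0 ≤ b α) ∧
    g = ∑ α ∈ J, MvPolynomial.C (b α) *
      ∏ i, (MvPolynomial.X i - MvPolynomial.C (h i)) ^ (2 * α i)

/-- A polynomial is a sum of squares. -/
def IsSos {n : ℕ} (p : MvPolynomial (Fin n) ℝ) : Prop :=
  ∃ (k : ℕ) (u : Fin k → MvPolynomial (Fin n) ℝ), p = ∑ i, (u i) ^ 2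


lemma round_nearest_int (x : ℝ) (m : ℤ) : |x - round x| ≤ |x - (m : ℝ)| := by
  rcases eq_or_ne (round x) m with rfl | hne
  · rfl
  · have h1 : (1 : ℝ) ≤ |(round x : ℝ) - m| := by
      have : round x - m ≠ 0 := sub_ne_zero.mpr (by exact_mod_cast hne)
      calc (1:ℝ) = ((1:ℤ) : ℝ) := by norm_num
        _ ≤ |((round x - m : ℤ) : ℝ)| := by
            exact_mod_cast Int.one_le_abs (by exact_mod_cast this)
        _ = |(round x : ℝ) - m| := by push_cast; ring_nf
    have h2 : |x - round x| ≤ 1/2 := abs_sub_round x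
    have h3 : |(round x : ℝ) - m| ≤ |(round x : ℝ) - x| + |x - m| := abs_sub_le _ _ _
    have h4 : |(round x : ℝ) - x| = |x - round x| := abs_sub_comm _ _
    linarith

lemma cone_min_at_round {n : ℕ} (h : Fin n → ℝ) (g : MvPolynomial (Fin n) ℝ)
    (hg : MemCone h g) (x : Fin n → ℤ) :
    eval (fun i => (round (h i) : ℝ)) g ≤ eval (fun i => (x i : ℝ)) g := by
  obtain ⟨J, b, hb, rfl⟩ := hg
  simp only [map_sum, map_mul, map_prod, map_pow, eval_C, map_sub, eval_X]
  apply Finset.sum_le_sum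
  intro α hα
  rcases eq_or_ne α 0 with rfl | hα0
  · simp
  · have hbα := hb α hα hα0
    apply mul_le_mul_of_nonneg_left _ hbα
    apply Finset.prod_le_prod
    · intro i _
      rw [pow_mul]
      positivity
    · intro i _
      rw [pow_mul, pow_mul]
      apply pow_le_pow_left₀ (sq_nonneg _)
      rw [← sq_abs, ← sq_abs ((x i : ℝ) - h i)]
      apply pow_le_pow_left₀ (abs_nonneg _)
      rw [abs_sub_comm, abs_sub_comm ((x i : ℝ)) (h i)]
      exact round_nearest_int (h i) (x i)

lemma isSos_eval_nonneg {n : ℕ} {p : MvPolynomial (Fin n) ℝ} (hp : IsSos p)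
    (v : Fin n → ℝ) : 0 ≤ eval v p := by
  obtain ⟨k, u, rfl⟩ := hp
  simp only [map_sum, map_pow]
  exact Finset.sum_nonneg fun i _ => sq_nonneg _

theorem sublevel_underestimator_gives_lower_bound
    {n : ℕ} (f g : MvPolynomial (Fin n) ℝ) (h : Fin n → ℝ)
    (hg : MemCone h g) (q : Fin n → ℤ) (z : ℝ)
    (hq : eval (fun i => (q i : ℝ)) f ≤ z) :
    ((∀ x : Fin n → ℝ, eval x f ≤ z → eval x g ≤ eval x f) →
      ∀ x : Fin n → ℤ,
        eval (fun i => (round (h i) : ℝ)) g ≤ eval (fun i => (x i : ℝ)) f) ∧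
    (∀ σ : MvPolynomial (Fin n) ℝ, IsSos σ →
      IsSos (f - g - σ * (MvPolynomial.C z - f)) →
      ∀ x : Fin n → ℤ,
        eval (fun i => (round (h i) : ℝ)) g ≤ eval (fun i => (x i : ℝ)) f) := by
  have main : (∀ x : Fin n → ℝ, eval x f ≤ z → eval x g ≤ eval x f) →
      ∀ x : Fin n → ℤ,
        eval (fun i => (round (h i) : ℝ)) g ≤ eval (fun i => (x i : ℝ)) f := by
    intro H x
    by_cases hx : eval (fun i => (x i : ℝ)) f ≤ z
    · exact le_trans (cone_min_at_round h g hg x) (H _ hx)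
    · calc eval (fun i => (round (h i) : ℝ)) g
          ≤ eval (fun i => (q i : ℝ)) g := cone_min_at_round h g hg q
        _ ≤ eval (fun i => (q i : ℝ)) f := H _ hq
        _ ≤ z := hq
        _ ≤ eval (fun i => (x i : ℝ)) f := le_of_not_ge hx
  refine ⟨main, fun σ hσ hsos => main fun x hx => ?_⟩
  have h1 := isSos_eval_nonneg hsos x
  have h2 := isSos_eval_nonneg hσ x
  simp only [map_sub, map_mul, eval_C] at h1
  nlinarith [mul_nonneg h2 (sub_nonneg.mpr hx)]
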